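/- arXiv:1809.06294 — 2 statements merged into one kernel-verified Lean document; each statement's English description precedes it below -/
import Mathlib

section
/- Let K ∈ End*_𝒜(H) and let {Λᵢ}_{i∈I} be a ∗-K-g-frame for H with bounds A, B ∈ 𝒜. If U ∈ End*_𝒜(H) is a co-isometry (i.e., UU* = id_H) satisfying KU = UK, then {Λᵢ ∘ U*}_{i∈I} is a ∗-K-g-frame for H with the same bounds A and B. -/
open scoped RightActions

/-- The Hilbert C⋆-module class as in the older Mathlib: a right `A`-module structure
(`SMul Aᵐᵒᵖ E`) with inner product `A`-linear on the right, `inner x (y <• a) = inner x y * a`. -/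
class CStarModuleOld (A E : Type*) [NonUnitalSemiring A] [StarRing A] [Module ℂ A]
    [AddCommGroup E] [Module ℂ E] [PartialOrder A] [SMul Aᵐᵒᵖ E] [Norm A] [Norm E]
    extends Inner A E where
  inner_add_right {x} {y} {z} : inner x (y + z) = inner x y + inner x z
  inner_self_nonneg {x} : 0 ≤ inner x x
  inner_self {x} : inner x x = 0 ↔ x = 0
  inner_op_smul_right {a : A} {x y : E} : inner x (y <• a) = inner x y * a
  inner_smul_right_complex {z : ℂ} {x} {y} : inner x (z • y) = z • inner x y
  star_inner x y : star (inner x y) = inner y x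
  norm_eq_sqrt_norm_inner_self x : ‖x‖ = √‖inner x x‖

/-- If `{Λ i}` is a `∗`-`K`-`g`-frame with bounds `a, b` and `U` is a
co-isometry (`U U* = id`) with `K U = U K`, then `{Λ i ∘ U*}` is a `∗`-`K`-`g`-frame with
the same bounds `a` and `b`. -/
theorem star_K_g_frame_comp_coisometry
    {𝓐 : Type*} [CStarAlgebra 𝓐] [PartialOrder 𝓐] [StarOrderedRing 𝓐]
    {I : Type*} [Countable I]
    {H : Type*} [NormedAddCommGroup H] [NormedSpace ℂ H] [SMul 𝓐ᵐᵒᵖ H]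
    [CStarModuleOld 𝓐 H] [CompleteSpace H]
    {Hi : I → Type*} [∀ i, NormedAddCommGroup (Hi i)] [∀ i, NormedSpace ℂ (Hi i)]
    [∀ i, SMul 𝓐ᵐᵒᵖ (Hi i)] [∀ i, CStarModuleOld 𝓐 (Hi i)] [∀ i, CompleteSpace (Hi i)]
    -- `K` is an adjointable operator on `H` with adjoint `Kadj`
    (K Kadj : H →L[ℂ] H)
    (hK : ∀ x y : H, (inner 𝓐 (K x) y : 𝓐) = inner 𝓐 x (Kadj y))
    -- the family `Λ i ∈ End*(H, Hi i)` of adjointable operators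
    (Λ : ∀ i, H →L[ℂ] Hi i) (Λadj : ∀ i, Hi i →L[ℂ] H)
    (hΛ : ∀ i (x : H) (y : Hi i), (inner 𝓐 (Λ i x) y : 𝓐) = inner 𝓐 x (Λadj i y))
    -- `{Λ i}` is a `∗`-`K`-`g`-frame with bounds `a`, `b`
    (a b : 𝓐) (ha : a ≠ 0) (hb : b ≠ 0)
    (hsum : ∀ x : H, Summable fun i => (inner 𝓐 (Λ i x) (Λ i x) : 𝓐))
    (hlow : ∀ x : H,
      a * (inner 𝓐 (Kadj x) (Kadj x) : 𝓐) * star a ≤ ∑' i, (inner 𝓐 (Λ i x) (Λ i x) : 𝓐))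
    (hup : ∀ x : H, ∑' i, (inner 𝓐 (Λ i x) (Λ i x) : 𝓐) ≤ b * (inner 𝓐 x x : 𝓐) * star b)
    -- `U` is an adjointable co-isometry commuting with `K`
    (U Uadj : H →L[ℂ] H)
    (hU : ∀ x y : H, (inner 𝓐 (U x) y : 𝓐) = inner 𝓐 x (Uadj y))
    (hUco : U.comp Uadj = ContinuousLinearMap.id ℂ H)
    (hcomm : K.comp U = U.comp K) :
    -- `{Λ i ∘ U*}` is a `∗`-`K`-`g`-frame with the same bounds `a`, `b`
    (∀ x : H, Summable fun i => (inner 𝓐 (Λ i (Uadj x)) (Λ i (Uadj x)) : 𝓐)) ∧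
    ∀ x : H,
      a * (inner 𝓐 (Kadj x) (Kadj x) : 𝓐) * star a ≤
          ∑' i, (inner 𝓐 (Λ i (Uadj x)) (Λ i (Uadj x)) : 𝓐) ∧
      ∑' i, (inner 𝓐 (Λ i (Uadj x)) (Λ i (Uadj x)) : 𝓐) ≤ b * (inner 𝓐 x x : 𝓐) * star b := by
  -- U (Uadj x) = x
  have hUU : ∀ x : H, U (Uadj x) = x := fun x =>
    congrFun (congrArg DFunLike.coe hUco) x
  -- ⟨Uadj x, Uadj x⟩ = ⟨x, x⟩
  have hinner : ∀ x : H, (inner 𝓐 (Uadj x) (Uadj x) : 𝓐) = inner 𝓐 x x := by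
    intro x
    have := hU (Uadj x) x
    rw [hUU x] at this
    exact this.symm
  -- Kadj ∘ Uadj = Uadj ∘ Kadj
  have hadjcomm : ∀ x : H, Kadj (Uadj x) = Uadj (Kadj x) := by
    intro x
    have key : ∀ z : H, (inner 𝓐 z (Kadj (Uadj x)) : 𝓐) = inner 𝓐 z (Uadj (Kadj x)) := by
      intro z
      rw [← hK z (Uadj x), ← hU (K z) x]
      have : K (U z) = U (K z) := by
        have := congrFun (congrArg DFunLike.coe hcomm) z
        simpa using this
      rw [← hU z (Kadj x), ← hK (U z) x, this]
    have hsub : ∀ u v w : H, (inner 𝓐 u (v - w) : 𝓐) = inner 𝓐 u v - inner 𝓐 u w := by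
      intro u v w
      have := CStarModuleOld.inner_add_right (A := 𝓐) (x := u) (y := v - w) (z := w)
      rw [sub_add_cancel] at this
      exact eq_sub_of_add_eq this.symm
    have hz : (inner 𝓐 (Kadj (Uadj x) - Uadj (Kadj x)) (Kadj (Uadj x) - Uadj (Kadj x)) : 𝓐) = 0 := by
      rw [hsub, key, sub_self]
    have hnorm : ‖Kadj (Uadj x) - Uadj (Kadj x)‖ = 0 := by
      rw [(CStarModuleOld.inner_self (A := 𝓐)).mp hz, norm_zero]
    exact sub_eq_zero.mp (norm_eq_zero.mp hnorm)
  have hKK : ∀ x : H, (inner 𝓐 (Kadj (Uadj x)) (Kadj (Uadj x)) : 𝓐) = inner 𝓐 (Kadj x) (Kadj x) := by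
    intro x
    rw [hadjcomm x, hinner (Kadj x)]
  refine ⟨fun x => hsum (Uadj x), fun x => ⟨?_, ?_⟩⟩
  · have := hlow (Uadj x)
    rwa [hKK x] at this
  · have := hup (Uadj x)
    rwa [hinner x] at this
end

section
/- Let K, L ∈ End*_𝒜(H) and let {Λᵢ}_{i∈I} be a ∗-K-g-frame for H with bounds A, B ∈ 𝒜. Then for every natural number n, the family {Λᵢ ∘ (L*)ⁿ}_{i∈I} is a ∗-(LⁿK)-g-frame for H, with bounds A and ‖L‖ⁿ·B. -/
open scoped RightActions

namespace CStarModuleOld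

variable {A : Type*} [CStarAlgebra A] [PartialOrder A] [StarOrderedRing A]
  {E : Type*} [NormedAddCommGroup E] [NormedSpace ℂ E] [SMul Aᵐᵒᵖ E] [CStarModuleOld A E]

lemma inner_sub_right {x y z : E} : inner A x (y - z) = inner A x y - inner A x z := by
  have h := CStarModuleOld.inner_add_right (A := A) (x := x) (y := y - z) (z := z)
  rw [sub_add_cancel] at h
  exact eq_sub_of_add_eq h.symm

lemma inner_sub_left {x y z : E} : inner A (x - y) z = inner A x z - inner A y z := by
  rw [← CStarModuleOld.star_inner (A := A) z (x - y), inner_sub_right, star_sub,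
    CStarModuleOld.star_inner, CStarModuleOld.star_inner]

lemma inner_zero_left {y : E} : inner A (0 : E) y = 0 := by
  simpa using inner_sub_left (A := A) (x := (0 : E)) (y := 0) (z := y)

lemma inner_zero_right {y : E} : inner A y (0 : E) = 0 := by
  simpa using inner_sub_right (A := A) (x := y) (y := (0 : E)) (z := 0)

lemma inner_op_smul_left {a : A} {x y : E} : inner A (x <• a) y = star a * inner A x y := by
  rw [← CStarModuleOld.star_inner (A := A) y (x <• a), CStarModuleOld.inner_op_smul_right,
    star_mul, CStarModuleOld.star_inner]

lemma inner_smul_right_real {z : ℝ} {x y : E} : inner A x (z • y) = z • inner A x y := by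
  have h₁ : z • y = (z : ℂ) • y := by simp
  rw [h₁, CStarModuleOld.inner_smul_right_complex]
  simp

lemma inner_smul_left_real {z : ℝ} {x y : E} : inner A (z • x) y = z • inner A x y := by
  rw [← CStarModuleOld.star_inner (A := A) y (z • x), inner_smul_right_real, star_smul,
    CStarModuleOld.star_inner, star_trivial]

lemma isSelfAdjoint_inner_self {x : E} : IsSelfAdjoint (inner A x x) :=
  CStarModuleOld.star_inner x x

lemma norm_sq_eq {x : E} : ‖x‖ ^ 2 = ‖inner A x x‖ := by
  rw [CStarModuleOld.norm_eq_sqrt_norm_inner_self (A := A) x, Real.sq_sqrt (norm_nonneg _)]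

lemma inner_mul_inner_swap_le {x y : E} : inner A y x * inner A x y ≤ ‖x‖ ^ 2 • inner A y y := by
  rcases eq_or_ne x 0 with h | h
  · simp [h, inner_zero_left, inner_zero_right]
  · have h₁ : ∀ a : A, (0 : A) ≤ ‖x‖ ^ 2 • (star a * a) - ‖x‖ ^ 2 • (star a * inner A x y)
        - ‖x‖ ^ 2 • (inner A y x * a) + ‖x‖ ^ 2 • (‖x‖ ^ 2 • inner A y y) := fun a => by
      calc (0 : A) ≤ inner A (x <• a - ‖x‖ ^ 2 • y) (x <• a - ‖x‖ ^ 2 • y) :=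
            CStarModuleOld.inner_self_nonneg
        _ = star a * inner A x x * a - ‖x‖ ^ 2 • (star a * inner A x y)
            - ‖x‖ ^ 2 • (inner A y x * a) + ‖x‖ ^ 2 • (‖x‖ ^ 2 • inner A y y) := by
            simp only [inner_sub_right, CStarModuleOld.inner_op_smul_right, inner_sub_left,
              inner_op_smul_left, inner_smul_left_real, inner_smul_right_real, smul_mul_assoc,
              mul_assoc, sub_mul, mul_sub, smul_sub]
            abel
        _ ≤ ‖x‖ ^ 2 • (star a * a) - ‖x‖ ^ 2 • (star a * inner A x y)
            - ‖x‖ ^ 2 • (inner A y x * a) + ‖x‖ ^ 2 • (‖x‖ ^ 2 • inner A y y) := by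
            gcongr
            calc star a * inner A x x * a ≤ ‖inner A x x‖ • (star a * a) :=
                CStarAlgebra.star_left_conjugate_le_norm_smul isSelfAdjoint_inner_self
              _ = ‖x‖ ^ 2 • (star a * a) := by rw [norm_sq_eq (A := A)]
    specialize h₁ (inner A x y)
    simp only [CStarModuleOld.star_inner, sub_self, zero_sub, le_neg_add_iff_add_le,
      add_zero] at h₁
    rwa [smul_le_smul_iff_of_pos_left (pow_pos (norm_pos_iff.mpr h) _)] at h₁

variable (E) in
lemma norm_inner_le {x y : E} : ‖(inner A x y)‖ ≤ ‖x‖ * ‖y‖ := by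
  have h1 : ‖(inner A x y)‖ ^ 2 = ‖(inner A y x * inner A x y)‖ := by
    rw [← CStarModuleOld.star_inner (A := A) x y, CStarRing.norm_star_mul_self, pow_two]
  have h2 : ‖(inner A y x * inner A x y)‖ ≤ ‖(‖x‖ ^ 2 • inner A y y)‖ := by
    refine CStarAlgebra.norm_le_norm_of_nonneg_of_le ?_ inner_mul_inner_swap_le
    rw [← CStarModuleOld.star_inner (A := A) x y]
    exact star_mul_self_nonneg _
  have h3 : ‖(‖x‖ ^ 2 • inner A y y)‖ = (‖x‖ * ‖y‖) ^ 2 := by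
    rw [norm_smul, ← norm_sq_eq (A := A) (x := y), Real.norm_eq_abs,
      abs_of_nonneg (by positivity), mul_pow]
  have : ‖(inner A x y)‖ ^ 2 ≤ (‖x‖ * ‖y‖) ^ 2 := by
    rw [h1, ← h3]
    exact h2
  exact (pow_le_pow_iff_left₀ (norm_nonneg _) (by positivity) (by simp)).mp this

end CStarModuleOld

open CStarModuleOld

section Helpers

variable {𝓐 : Type*} [CStarAlgebra 𝓐] [PartialOrder 𝓐] [StarOrderedRing 𝓐]
  {H : Type*} [NormedAddCommGroup H] [NormedSpace ℂ H] [SMul 𝓐ᵐᵒᵖ H]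
  [CStarModuleOld 𝓐 H] [CompleteSpace H]

lemma myAdj_inner (L Ladj : H →L[ℂ] H)
    (hL : ∀ x y : H, (inner 𝓐 (L x) y : 𝓐) = inner 𝓐 x (Ladj y)) (x y : H) :
    (inner 𝓐 (Ladj x) y : 𝓐) = inner 𝓐 x (L y) := by
  have h := congrArg star (hL y x)
  rw [star_inner, star_inner] at h
  exact h.symm

lemma myAdj_op_smul (L Ladj : H →L[ℂ] H)
    (hL : ∀ x y : H, (inner 𝓐 (L x) y : 𝓐) = inner 𝓐 x (Ladj y)) (x : H) (c : 𝓐) :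
    Ladj (x <• c) = (Ladj x) <• c := by
  have h : ∀ y : H, (inner 𝓐 (Ladj (x <• c) - (Ladj x) <• c) y : 𝓐) = 0 := by
    intro y
    rw [CStarModuleOld.inner_sub_left, myAdj_inner L Ladj hL, inner_op_smul_left, inner_op_smul_left,
      myAdj_inner L Ladj hL, sub_self]
  exact sub_eq_zero.mp (inner_self.mp (h _))

lemma myAdj_norm_le (L Ladj : H →L[ℂ] H)
    (hL : ∀ x y : H, (inner 𝓐 (L x) y : 𝓐) = inner 𝓐 x (Ladj y)) (y : H) :
    ‖Ladj y‖ ≤ ‖L‖ * ‖y‖ := by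
  have h2 : ‖Ladj y‖ ^ 2 ≤ (‖L‖ * ‖y‖) * ‖Ladj y‖ := by
    rw [norm_sq_eq (A := 𝓐)]
    calc ‖(inner 𝓐 (Ladj y) (Ladj y) : 𝓐)‖ = ‖(inner 𝓐 y (L (Ladj y)) : 𝓐)‖ := by
          rw [myAdj_inner L Ladj hL]
      _ ≤ ‖y‖ * ‖L (Ladj y)‖ := norm_inner_le H
      _ ≤ ‖y‖ * (‖L‖ * ‖Ladj y‖) := by
          gcongr
          exact L.le_opNorm _
      _ = (‖L‖ * ‖y‖) * ‖Ladj y‖ := by ring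
  rcases eq_or_lt_of_le (norm_nonneg (Ladj y)) with h0 | h0
  · rw [← h0]; positivity
  · rw [pow_two] at h2
    exact le_of_mul_le_mul_right h2 h0

lemma my_key (L Ladj : H →L[ℂ] H)
    (hL : ∀ x y : H, (inner 𝓐 (L x) y : 𝓐) = inner 𝓐 x (Ladj y)) (x : H) :
    (inner 𝓐 (Ladj x) (Ladj x) : 𝓐) ≤ ‖L‖ ^ 2 • (inner 𝓐 x x : 𝓐) := by
  rcases subsingleton_or_nontrivial 𝓐 with h𝓐 | h𝓐
  · exact le_of_eq (Subsingleton.elim _ _)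
  set a : 𝓐 := inner 𝓐 x x with ha_def
  set c : 𝓐 := inner 𝓐 (Ladj x) (Ladj x) with hc_def
  have ha : (0:𝓐) ≤ a := inner_self_nonneg
  have hc : (0:𝓐) ≤ c := inner_self_nonneg
  have h1 : (0:𝓐) ≤ 1 := by simpa using star_mul_self_nonneg (1:𝓐)
  set M : ℝ := ‖L‖ ^ 2 with hM_def
  have hM : 0 ≤ M := by positivity
  have claim : ∀ ε : ℝ, 0 < ε → c ≤ M • a + (M * ε) • (1:𝓐) := by
    intro ε hε
    set d : 𝓐 := a + ε • (1:𝓐) with hd_def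
    have hε1 : (0:𝓐) ≤ ε • (1:𝓐) := smul_nonneg hε.le h1
    have hd0 : (0:𝓐) ≤ d := add_nonneg ha hε1
    have had : a ≤ d := le_add_of_nonneg_right hε1
    have hdu : IsUnit d := by
      refine CStarAlgebra.isUnit_of_le _ (le_add_of_nonneg_left ha) (IsUnit.isStrictlyPositive ?_ hε1)
      rw [← Algebra.algebraMap_eq_smul_one]
      exact (isUnit_iff_ne_zero.mpr hε.ne').map (algebraMap ℝ 𝓐)
    have h0spec : 0 ∉ spectrum NNReal d := spectrum.zero_notMem_iff NNReal |>.mpr hdu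
    set p : 𝓐 := d ^ (-(1/2) : ℝ) with hp_def
    have hp : (0:𝓐) ≤ p := CFC.rpow_nonneg
    have hps : star p = p := (IsSelfAdjoint.of_nonneg hp).star_eq
    have hpd : p * d * p = 1 := CFC.conjugate_rpow_neg_one_half d (hdu.isStrictlyPositive hd0)
    set q : 𝓐 := CFC.sqrt d with hq_def
    have hq : (0:𝓐) ≤ q := CFC.sqrt_nonneg d
    have hqs : star q = q := (IsSelfAdjoint.of_nonneg hq).star_eq
    have hqp : q * p = 1 := by
      rw [hq_def, hp_def, CFC.sqrt_eq_rpow]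
      exact CFC.rpow_mul_rpow_neg (1/2) (hdu.isStrictlyPositive hd0)
    have hpq : p * q = 1 := by
      rw [hq_def, hp_def, CFC.sqrt_eq_rpow]
      exact CFC.rpow_neg_mul_rpow (1/2) (hdu.isStrictlyPositive hd0)
    have hqq : q * q = d := CFC.sqrt_mul_sqrt_self d hd0
    set xε : H := x <• p with hxε_def
    have hxε : (inner 𝓐 xε xε : 𝓐) = p * a * p := by
      rw [hxε_def, inner_op_smul_left, inner_op_smul_right, hps, ha_def, mul_assoc]
    have hle1 : (inner 𝓐 xε xε : 𝓐) ≤ 1 := by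
      rw [hxε]
      calc p * a * p ≤ p * d * p := by
            have := star_left_conjugate_le_conjugate had p
            rwa [hps] at this
        _ = 1 := hpd
    have hnorm : ‖xε‖ ≤ 1 := by
      have h2 : ‖xε‖ ^ 2 ≤ 1 := by
        rw [norm_sq_eq (A := 𝓐)]
        calc ‖(inner 𝓐 xε xε : 𝓐)‖ ≤ ‖(1:𝓐)‖ :=
              CStarAlgebra.norm_le_norm_of_nonneg_of_le inner_self_nonneg hle1
          _ = 1 := norm_one
      nlinarith [norm_nonneg xε]
    have hLx : Ladj xε = (Ladj x) <• p := myAdj_op_smul L Ladj hL x p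
    have hinner2 : (inner 𝓐 (Ladj xε) (Ladj xε) : 𝓐) = p * c * p := by
      rw [hLx, inner_op_smul_left, inner_op_smul_right, hps, hc_def, mul_assoc]
    have hbound : p * c * p ≤ algebraMap ℝ 𝓐 M := by
      rw [← hinner2]
      calc (inner 𝓐 (Ladj xε) (Ladj xε) : 𝓐)
          ≤ algebraMap ℝ 𝓐 ‖(inner 𝓐 (Ladj xε) (Ladj xε) : 𝓐)‖ :=
            IsSelfAdjoint.le_algebraMap_norm_self isSelfAdjoint_inner_self
        _ ≤ algebraMap ℝ 𝓐 M := by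
            rw [← sub_nonneg, ← map_sub, Algebra.algebraMap_eq_smul_one]
            refine smul_nonneg (sub_nonneg.2 ?_) h1
            rw [← norm_sq_eq (A := 𝓐)]
            have hle : ‖Ladj xε‖ ≤ ‖L‖ := by
              calc ‖Ladj xε‖ ≤ ‖L‖ * ‖xε‖ := myAdj_norm_le L Ladj hL xε
                _ ≤ ‖L‖ * 1 := by gcongr
                _ = ‖L‖ := mul_one _
            rw [hM_def]
            gcongr
    have hfinal : c ≤ M • d := by
      calc c = q * (p * c * p) * q := by
            have he : q * (p * c * p) * q = (q * p) * (c * (p * q)) := by noncomm_ring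
            rw [he, hqp, hpq, one_mul, mul_one]
        _ ≤ q * algebraMap ℝ 𝓐 M * q := by
            have := star_left_conjugate_le_conjugate hbound q
            rwa [hqs] at this
        _ = M • (q * q) := by
            rw [Algebra.algebraMap_eq_smul_one]
            simp [mul_smul_comm, smul_mul_assoc]
        _ = M • d := by rw [hqq]
    calc c ≤ M • d := hfinal
      _ = M • a + (M * ε) • (1:𝓐) := by rw [hd_def, smul_add, smul_smul]
  have tend : Filter.Tendsto (fun n : ℕ => M • a + (M * (1 / (n + 1 : ℝ))) • (1:𝓐))
      Filter.atTop (nhds (M • a)) := by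
    have h0 : Filter.Tendsto (fun n : ℕ => (1 : ℝ) / (n + 1)) Filter.atTop (nhds 0) :=
      tendsto_one_div_add_atTop_nhds_zero_nat
    have := ((h0.const_mul M).smul_const (1:𝓐)).const_add (M • a)
    simpa using this
  exact ge_of_tendsto' tend fun n => claim _ (by positivity)


lemma my_key_pow (L Ladj : H →L[ℂ] H)
    (hL : ∀ x y : H, (inner 𝓐 (L x) y : 𝓐) = inner 𝓐 x (Ladj y)) (n : ℕ) (f : H) :
    (inner 𝓐 ((Ladj ^ n) f) ((Ladj ^ n) f) : 𝓐) ≤ ((‖L‖ ^ n) ^ 2) • (inner 𝓐 f f : 𝓐) := by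
  induction n with
  | zero => simp
  | succ n ih =>
      have hpow : (Ladj ^ (n + 1)) f = Ladj ((Ladj ^ n) f) := by
        rw [pow_succ']; rfl
      rw [hpow]
      calc (inner 𝓐 (Ladj ((Ladj ^ n) f)) (Ladj ((Ladj ^ n) f)) : 𝓐)
          ≤ ‖L‖ ^ 2 • (inner 𝓐 ((Ladj ^ n) f) ((Ladj ^ n) f) : 𝓐) := my_key L Ladj hL _
        _ ≤ ‖L‖ ^ 2 • (((‖L‖ ^ n) ^ 2) • (inner 𝓐 f f : 𝓐)) :=
            smul_le_smul_of_nonneg_left ih (by positivity)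
        _ = ((‖L‖ ^ (n + 1)) ^ 2) • (inner 𝓐 f f : 𝓐) := by
            rw [smul_smul]
            congr 1
            ring

end Helpers

/-- If `{Λ i}` is a `∗`-`K`-`g`-frame with bounds `a, b` and
`L ∈ End*(H)`, then for every `n : ℕ` the family `{Λ i ∘ (L*)ⁿ}` is a `∗`-`(LⁿK)`-`g`-frame
with bounds `a` and `‖L‖ⁿ·b`. -/
theorem star_LnK_g_frame_comp_adjoint_pow
    {𝓐 : Type*} [CStarAlgebra 𝓐] [PartialOrder 𝓐] [StarOrderedRing 𝓐]
    {I : Type*} [Countable I]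
    {H : Type*} [NormedAddCommGroup H] [NormedSpace ℂ H] [SMul 𝓐ᵐᵒᵖ H]
    [CStarModuleOld 𝓐 H] [CompleteSpace H]
    {Hi : I → Type*} [∀ i, NormedAddCommGroup (Hi i)] [∀ i, NormedSpace ℂ (Hi i)]
    [∀ i, SMul 𝓐ᵐᵒᵖ (Hi i)] [∀ i, CStarModuleOld 𝓐 (Hi i)] [∀ i, CompleteSpace (Hi i)]
    -- `K` and `L` are adjointable operators on `H` with adjoints `Kadj`, `Ladj`
    (K Kadj L Ladj : H →L[ℂ] H)
    (hK : ∀ x y : H, (inner 𝓐 (K x) y : 𝓐) = inner 𝓐 x (Kadj y))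
    (hL : ∀ x y : H, (inner 𝓐 (L x) y : 𝓐) = inner 𝓐 x (Ladj y))
    -- the family `Λ i ∈ End*(H, Hi i)` of adjointable operators
    (Λ : ∀ i, H →L[ℂ] Hi i) (Λadj : ∀ i, Hi i →L[ℂ] H)
    (hΛ : ∀ i (x : H) (y : Hi i), (inner 𝓐 (Λ i x) y : 𝓐) = inner 𝓐 x (Λadj i y))
    -- `{Λ i}` is a `∗`-`K`-`g`-frame with bounds `a`, `b`
    (a b : 𝓐) (ha : a ≠ 0) (hb : b ≠ 0)
    (hsum : ∀ x : H, Summable fun i => (inner 𝓐 (Λ i x) (Λ i x) : 𝓐))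
    (hlow : ∀ x : H,
      a * (inner 𝓐 (Kadj x) (Kadj x) : 𝓐) * star a ≤ ∑' i, (inner 𝓐 (Λ i x) (Λ i x) : 𝓐))
    (hup : ∀ x : H, ∑' i, (inner 𝓐 (Λ i x) (Λ i x) : 𝓐) ≤ b * (inner 𝓐 x x : 𝓐) * star b) :
    -- for every `n`, `{Λ i ∘ (L*)ⁿ}` is a `∗`-`(LⁿK)`-`g`-frame with bounds `a`, `‖L‖ⁿ·b`
    ∀ n : ℕ,
      (∀ f : H, Summable fun i =>
        (inner 𝓐 (Λ i ((Ladj ^ n) f)) (Λ i ((Ladj ^ n) f)) : 𝓐)) ∧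
      ∀ f : H,
        a * (inner 𝓐 (Kadj ((Ladj ^ n) f)) (Kadj ((Ladj ^ n) f)) : 𝓐) * star a ≤
            ∑' i, (inner 𝓐 (Λ i ((Ladj ^ n) f)) (Λ i ((Ladj ^ n) f)) : 𝓐) ∧
        ∑' i, (inner 𝓐 (Λ i ((Ladj ^ n) f)) (Λ i ((Ladj ^ n) f)) : 𝓐) ≤
            (‖L‖ ^ n) ^ 2 • (b * (inner 𝓐 f f : 𝓐) * star b) := by
  intro n
  refine ⟨fun f => hsum _, fun f => ⟨hlow _, ?_⟩⟩
  calc ∑' i, (inner 𝓐 (Λ i ((Ladj ^ n) f)) (Λ i ((Ladj ^ n) f)) : 𝓐)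
      ≤ b * (inner 𝓐 ((Ladj ^ n) f) ((Ladj ^ n) f) : 𝓐) * star b := hup _
    _ ≤ b * (((‖L‖ ^ n) ^ 2) • (inner 𝓐 f f : 𝓐)) * star b :=
        star_right_conjugate_le_conjugate (my_key_pow L Ladj hL n f) b
    _ = (‖L‖ ^ n) ^ 2 • (b * (inner 𝓐 f f : 𝓐) * star b) := by
        rw [mul_smul_comm, smul_mul_assoc]
end
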